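/- Let A, B, C, D, q ∈ ℂ with A ≠ 0, B ≠ 0, and 0 < |q| < 1. Suppose f : ℂ → ℂ is an exponential polynomial, i.e. there exist finitely many complex polynomials P_1, Q_1, …, P_k, Q_k such that f(z) = Σ_{j=1}^{k} P_j(z)·exp(Q_j(z)) for all z ∈ ℂ. If f satisfies f'(z) = A·f(qz) + B·f(z)^2 + C·f(z) + D for all z ∈ ℂ, then f is constant. In particular, (†) has no exponential polynomial solutions involving a nonconstant exponent. -/

import Mathlib

open Complex


open Polynomial

namespace EPaux

/-- coefficient of `p.comp (C q * X)` -/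
lemma scale_coeff (q : ℂ) (p : ℂ[X]) (d : ℕ) :
    (p.comp (Polynomial.C q * Polynomial.X)).coeff d = p.coeff d * q ^ d := by
  induction p using Polynomial.induction_on' with
  | add p r hp hr => simp [add_comp, coeff_add, hp, hr, add_mul]
  | monomial n a =>
      have h1 : ((monomial n a) : ℂ[X]).comp (Polynomial.C q * Polynomial.X)
          = Polynomial.C (a * q ^ n) * Polynomial.X ^ n := by
        rw [← Polynomial.C_mul_X_pow_eq_monomial]
        rw [mul_comp, C_comp, pow_comp, X_comp]
        rw [mul_pow, ← Polynomial.C_pow, ← mul_assoc, ← map_mul]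
      rw [h1, coeff_C_mul, coeff_X_pow, coeff_monomial]
      by_cases h : n = d
      · simp [h]
      · simp [h, Ne.symm h]

/-- derivative of an exponential polynomial sum -/
lemma hasDerivAt_expsum (E : Finset ℂ[X]) (c : ℂ[X] → ℂ[X]) (z : ℂ) :
    HasDerivAt (fun w => ∑ Q ∈ E, (c Q).eval w * Complex.exp (Q.eval w))
      (∑ Q ∈ E, ((c Q).derivative + c Q * Q.derivative).eval z * Complex.exp (Q.eval z)) z := by
  apply HasDerivAt.fun_sum
  intro Q _
  have h1 : HasDerivAt (fun w => (c Q).eval w) ((c Q).derivative.eval z) z :=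
    (c Q).hasDerivAt z
  have h2 : HasDerivAt (fun w => Complex.exp (Q.eval w))
      (Complex.exp (Q.eval z) * Q.derivative.eval z) z := (Q.hasDerivAt z).cexp
  have := h1.fun_mul h2
  convert this using 1
  · rfl
  simp [eval_add, eval_mul]
  ring

end EPaux

open Polynomial

namespace EPaux2

noncomputable def DOp (Q P : ℂ[X]) : ℂ[X] := P.derivative + P * Q.derivative

lemma DOp_ne_zero {Q P : ℂ[X]} (hQ : Q.derivative ≠ 0) (hP : P ≠ 0) : DOp Q P ≠ 0 := by
  unfold DOp
  by_cases hd : P.natDegree = 0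
  · obtain ⟨a, rfl⟩ : ∃ a, P = Polynomial.C a := ⟨P.coeff 0, P.eq_C_of_natDegree_eq_zero hd⟩
    simp only [derivative_C, zero_add]
    exact mul_ne_zero hP hQ
  · intro h
    have hco : (P.derivative + P * Q.derivative).coeff (P.natDegree + Q.derivative.natDegree)
        = P.leadingCoeff * Q.derivative.leadingCoeff := by
      rw [coeff_add, Polynomial.coeff_mul_degree_add_degree]
      have : P.derivative.natDegree < P.natDegree + Q.derivative.natDegree :=
        lt_of_lt_of_le (Polynomial.natDegree_derivative_lt hd) (Nat.le_add_right _ _)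
      rw [Polynomial.coeff_eq_zero_of_natDegree_lt this, zero_add]
    rw [h] at hco
    simp only [coeff_zero] at hco
    exact mul_ne_zero (Polynomial.leadingCoeff_ne_zero.mpr hP)
      (Polynomial.leadingCoeff_ne_zero.mpr hQ) hco.symm

lemma DOp_iter_ne_zero {Q P : ℂ[X]} (hQ : Q.derivative ≠ 0) (hP : P ≠ 0) (N : ℕ) :
    (DOp Q)^[N] P ≠ 0 := by
  induction N with
  | zero => simpa
  | succ n ih => rw [Function.iterate_succ_apply']; exact DOp_ne_zero hQ ih

lemma step_identity (E : Finset ℂ[X]) (c : ℂ[X] → ℂ[X])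
    (h : ∀ z, ∑ Q ∈ E, (c Q).eval z * Complex.exp (Q.eval z) = 0) :
    ∀ z, ∑ Q ∈ E, (DOp Q (c Q)).eval z * Complex.exp (Q.eval z) = 0 := by
  intro z
  have h0 : (fun w => ∑ Q ∈ E, (c Q).eval w * Complex.exp (Q.eval w)) = fun _ => (0:ℂ) := by
    funext w; exact h w
  have := EPaux.hasDerivAt_expsum E c z
  rw [h0] at this
  have h2 : HasDerivAt (fun _ : ℂ => (0:ℂ)) 0 z := hasDerivAt_const z 0
  have := this.unique h2
  simpa [DOp] using this

lemma iter_identity (E : Finset ℂ[X]) (c : ℂ[X] → ℂ[X]) (N : ℕ)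
    (h : ∀ z, ∑ Q ∈ E, (c Q).eval z * Complex.exp (Q.eval z) = 0) :
    ∀ z, ∑ Q ∈ E, ((DOp Q)^[N] (c Q)).eval z * Complex.exp (Q.eval z) = 0 := by
  induction N with
  | zero => simpa
  | succ n ih =>
      have := step_identity E (fun Q => (DOp Q)^[n] (c Q)) ih
      intro z
      have h2 := this z
      simp only [← Function.iterate_succ_apply' (DOp _)] at h2
      exact h2

lemma indep : ∀ (n : ℕ) (E : Finset ℂ[X]) (c : ℂ[X] → ℂ[X]), E.card ≤ n →
    (∀ Q ∈ E, ∀ Q' ∈ E, Q ≠ Q' → (Q - Q').natDegree ≠ 0) →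
    (∀ z, ∑ Q ∈ E, (c Q).eval z * Complex.exp (Q.eval z) = 0) →
    ∀ Q ∈ E, c Q = 0 := by
  intro n
  induction n with
  | zero =>
      intro E c hc _ _ Q hQ
      rw [Nat.le_zero, Finset.card_eq_zero] at hc
      subst hc; exact absurd hQ (Finset.notMem_empty Q)
  | succ n ih =>
      intro E c hcard hdiff hz
      rcases Finset.eq_empty_or_nonempty E with rfl | ⟨t, ht⟩
      · intro Q hQ; exact absurd hQ (Finset.notMem_empty Q)
      -- translate exponents by t
      set E₁ : Finset ℂ[X] := E.image (fun Q => Q - t) with hE₁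
      have hinj : Function.Injective (fun Q : ℂ[X] => Q - t) := fun a b h => by
        simpa using sub_left_injective h
      set c₁ : ℂ[X] → ℂ[X] := fun Q => c (Q + t) with hc₁
      have hz₁ : ∀ z, ∑ Q ∈ E₁, (c₁ Q).eval z * Complex.exp (Q.eval z) = 0 := by
        intro z
        rw [hE₁, Finset.sum_image (fun a _ b _ h => hinj h)]
        have : ∀ Q ∈ E, (c₁ (Q - t)).eval z * Complex.exp ((Q - t).eval z)
            = ((c Q).eval z * Complex.exp (Q.eval z)) * (Complex.exp (t.eval z))⁻¹ := by
          intro Q _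
          rw [hc₁]; simp only [sub_add_cancel]
          rw [eval_sub, Complex.exp_sub]
          field_simp
        rw [Finset.sum_congr rfl this, ← Finset.sum_mul, hz z, zero_mul]
      have h0mem : (0:ℂ[X]) ∈ E₁ := by
        rw [hE₁]; exact Finset.mem_image.mpr ⟨t, ht, sub_self t⟩
      have hdiff₁ : ∀ Q ∈ E₁, ∀ Q' ∈ E₁, Q ≠ Q' → (Q - Q').natDegree ≠ 0 := by
        intro Q hQ Q' hQ' hne
        rw [hE₁] at hQ hQ'
        obtain ⟨a, ha, rfl⟩ := Finset.mem_image.mp hQ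
        obtain ⟨b, hb, rfl⟩ := Finset.mem_image.mp hQ'
        have : a - t - (b - t) = a - b := by ring
        rw [this]
        exact hdiff a ha b hb (fun h => hne (by rw [h]))
      set N : ℕ := (c₁ 0).natDegree + 1 with hN
      set c₂ : ℂ[X] → ℂ[X] := fun Q => (DOp Q)^[N] (c₁ Q) with hc₂
      have hz₂ := iter_identity E₁ c₁ N hz₁
      have hc₂0 : c₂ 0 = 0 := by
        rw [hc₂]
        have hD0 : DOp (0:ℂ[X]) = fun P : ℂ[X] => P.derivative := by
          funext P; simp [DOp]
        simp only [hD0]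
        have : (fun P : ℂ[X] => P.derivative)^[N] (c₁ 0)
            = (Polynomial.derivative (R := ℂ))^[N] (c₁ 0) := by
          congr 1
        rw [this]
        exact Polynomial.iterate_derivative_eq_zero (by omega)
      have hz₂' : ∀ z, ∑ Q ∈ E₁.erase 0, (c₂ Q).eval z * Complex.exp (Q.eval z) = 0 := by
        intro z
        have := hz₂ z
        rw [← Finset.add_sum_erase _ _ h0mem] at this
        rw [show (DOp (0:ℂ[X]))^[N] (c₁ 0) = 0 from hc₂0] at this
        simp only [hc₂]
        simpa using this
      have hcard₁ : (E₁.erase 0).card ≤ n := by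
        have h1 : E₁.card = E.card := Finset.card_image_of_injective _ hinj
        have := Finset.card_erase_of_mem h0mem
        omega
      have hIH := ih (E₁.erase 0) c₂ hcard₁
        (fun Q hQ Q' hQ' => hdiff₁ Q (Finset.mem_of_mem_erase hQ) Q' (Finset.mem_of_mem_erase hQ'))
        hz₂'
      -- conclude c₁ Q = 0 for Q ∈ E₁ \ {0}
      have hc₁zero : ∀ Q ∈ E₁, Q ≠ 0 → c₁ Q = 0 := by
        intro Q hQ hQ0
        have hmem : Q ∈ E₁.erase 0 := Finset.mem_erase.mpr ⟨hQ0, hQ⟩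
        have h2 := hIH Q hmem
        by_contra hne
        have hQd : Q.derivative ≠ 0 := by
          intro hd
          have := Polynomial.natDegree_eq_zero_of_derivative_eq_zero hd
          have h3 := hdiff₁ Q hQ 0 h0mem hQ0
          rw [sub_zero] at h3
          exact h3 this
        exact DOp_iter_ne_zero hQd hne N h2
      -- so c Q = 0 for Q ∈ E, Q ≠ t
      have hcE : ∀ Q ∈ E, Q ≠ t → c Q = 0 := by
        intro Q hQ hQt
        have h1 : Q - t ∈ E₁ := Finset.mem_image.mpr ⟨Q, hQ, rfl⟩
        have h2 : Q - t ≠ 0 := sub_ne_zero.mpr hQt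
        have := hc₁zero _ h1 h2
        rw [hc₁] at this
        simpa [sub_add_cancel] using this
      -- finally c t = 0
      have hct : c t = 0 := by
        have hzz : ∀ z : ℂ, (c t).eval z = 0 := by
          intro z
          have := hz z
          rw [← Finset.add_sum_erase _ _ ht] at this
          have hrest : ∑ Q ∈ E.erase t, (c Q).eval z * Complex.exp (Q.eval z) = 0 := by
            apply Finset.sum_eq_zero
            intro Q hQ
            rw [hcE Q (Finset.mem_of_mem_erase hQ) (Finset.ne_of_mem_erase hQ)]
            simp
          rw [hrest, add_zero] at this
          have hexp := Complex.exp_ne_zero (t.eval z)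
          exact (mul_eq_zero.mp this).resolve_right hexp
        have : c t = 0 := by
          apply Polynomial.funext
          intro z; rw [hzz z, eval_zero]
        exact this
      intro Q hQ
      by_cases h : Q = t
      · rw [h]; exact hct
      · exact hcE Q hQ h

end EPaux2

open Polynomial

namespace EPaux3

instance wfFin (n : ℕ) : WellFoundedLT (Fin n) := Finite.to_wellFoundedLT

lemma convex_max {G : Type*} [AddCommGroup G] [LinearOrder G] [IsOrderedAddMonoid G] {a b c : G}
    (ha : a ≤ c) (hb : b ≤ c) (h : a + b = c + c) : a = c ∧ b = c := by
  constructor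
  · by_contra hne
    have h1 : a < c := lt_of_le_of_ne ha hne
    have h2 : a + b < c + c := add_lt_add_of_lt_of_le h1 hb
    rw [h] at h2; exact lt_irrefl _ h2
  · by_contra hne
    have h1 : b < c := lt_of_le_of_ne hb hne
    have h2 : a + b < c + c := add_lt_add_of_le_of_lt ha h1
    rw [h] at h2; exact lt_irrefl _ h2

lemma lex_lt_first {n : ℕ} (hn : 0 < n) (x y : Fin n → ℝ) (h : x ⟨0, hn⟩ < y ⟨0, hn⟩) :
    toLex x < toLex y := by
  refine ⟨⟨0, hn⟩, ?_, h⟩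
  intro j hj
  exact absurd hj (by simp [Fin.lt_def])

noncomputable def Fmap (m : ℕ) (u : ℂ) (p : ℂ[X]) : Lex (Fin (2*m+2) → ℝ) :=
  toLex fun i => if (i : ℕ) % 2 = 0 then ((starRingEnd ℂ) u * p.coeff (m - (i : ℕ)/2)).re
                 else ((starRingEnd ℂ) u * p.coeff (m - (i : ℕ)/2)).im

lemma Fmap_add (m : ℕ) (u : ℂ) (p r : ℂ[X]) :
    Fmap m u (p + r) = Fmap m u p + Fmap m u r := by
  unfold Fmap
  rw [← toLex_add]
  congr 1
  funext i
  by_cases h : (i : ℕ) % 2 = 0 <;> simp [h, coeff_add, mul_add]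

lemma Fmap_zero (m : ℕ) (u : ℂ) : Fmap m u 0 = 0 := by
  unfold Fmap
  have : (fun i : Fin (2*m+2) => if (i : ℕ) % 2 = 0
      then ((starRingEnd ℂ) u * (0:ℂ[X]).coeff (m - (i : ℕ)/2)).re
      else ((starRingEnd ℂ) u * (0:ℂ[X]).coeff (m - (i : ℕ)/2)).im) = fun _ => (0:ℝ) := by
    funext i; by_cases h : (i : ℕ) % 2 = 0 <;> simp [h]
  rw [this]; rfl

lemma Fmap_first (m : ℕ) (u : ℂ) (p : ℂ[X]) :
    ofLex (Fmap m u p) ⟨0, by omega⟩ = ((starRingEnd ℂ) u * p.coeff m).re := by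
  unfold Fmap
  norm_num

lemma Fmap_inj {m : ℕ} {u : ℂ} (hu : u ≠ 0) {p r : ℂ[X]}
    (hp : p.natDegree ≤ m) (hr : r.natDegree ≤ m) (h : Fmap m u p = Fmap m u r) : p = r := by
  have hcoeff : ∀ d, d ≤ m → p.coeff d = r.coeff d := by
    intro d hd
    have h1 : (2*(m-d) : ℕ) < 2*m+2 := by omega
    have h2 : (2*(m-d)+1 : ℕ) < 2*m+2 := by omega
    have e1 := congrFun (congrArg ofLex h) ⟨2*(m-d), h1⟩
    have e2 := congrFun (congrArg ofLex h) ⟨2*(m-d)+1, h2⟩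
    unfold Fmap at e1 e2
    have hm1 : (2*(m-d)) % 2 = 0 := by omega
    have hm2 : (2*(m-d)+1) % 2 ≠ 0 := by omega
    have hd1 : (2*(m-d))/2 = m - d := by omega
    have hd2 : (2*(m-d)+1)/2 = m - d := by omega
    have hmd : m - (m - d) = d := by omega
    simp only [ofLex_toLex, hm1, hd1, hmd, if_true] at e1
    simp only [ofLex_toLex, hm2, hd2, hmd, if_false] at e2
    have : (starRingEnd ℂ) u * p.coeff d = (starRingEnd ℂ) u * r.coeff d :=
      Complex.ext e1 e2
    have hcu : (starRingEnd ℂ) u ≠ 0 := by simpa using hu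
    exact mul_left_cancel₀ hcu this
  ext d
  by_cases hd : d ≤ m
  · exact hcoeff d hd
  · rw [Polynomial.coeff_eq_zero_of_natDegree_lt (by omega),
        Polynomial.coeff_eq_zero_of_natDegree_lt (by omega)]

lemma choose_top (S : Finset ℂ[X]) (hSne : S.Nonempty) (m : ℕ) (M : ℝ)
    (hdegS : ∀ e ∈ S, e.natDegree ≤ m)
    (hMub : ∀ e ∈ S, ‖e.coeff m‖ ≤ M)
    (hMpos : 0 < M)
    (hQ0 : ∃ e ∈ S, ‖e.coeff m‖ = M) :
    ∃ Qt ∈ S, (∀ e1 ∈ S, ∀ e2 ∈ S, e1 + e2 = Qt + Qt → e1 = Qt ∧ e2 = Qt)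
      ∧ (Qt + Qt ∉ S) ∧ (Qt + Qt ≠ 0) ∧ ‖Qt.coeff m‖ = M := by
  obtain ⟨Q0, hQ0S, hQ0abs⟩ := hQ0
  set u : ℂ := Q0.coeff m with hudef
  have habsu : ‖u‖ = M := hQ0abs
  have hu : u ≠ 0 := by
    intro h
    rw [h] at habsu; simp at habsu; rw [← habsu] at hMpos; exact lt_irrefl _ hMpos
  have hn2 : 0 < 2*m+2 := by omega
  set F : ℂ[X] → Lex (Fin (2*m+2) → ℝ) := Fmap m u with hFdef
  obtain ⟨Qt, hQtS, hQtmax⟩ := Finset.exists_max_image S F hSne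
  have hfirst : ∀ e : ℂ[X], ofLex (F e) ⟨0, hn2⟩ = ((starRingEnd ℂ) u * e.coeff m).re :=
    fun e => Fmap_first m u e
  have hFQ0 : ofLex (F Q0) ⟨0, hn2⟩ = M * M := by
    rw [hfirst]
    have h1 : (starRingEnd ℂ) u * Q0.coeff m = (Complex.normSq u : ℂ) := by
      rw [← hudef, mul_comm]; exact Complex.mul_conj u
    rw [h1, Complex.ofReal_re, Complex.normSq_eq_norm_sq, habsu, sq]
  have hub : ∀ e ∈ S, ofLex (F e) ⟨0, hn2⟩ ≤ M * M := by
    intro e he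
    rw [hfirst]
    calc ((starRingEnd ℂ) u * e.coeff m).re
        ≤ ‖(starRingEnd ℂ) u * e.coeff m‖ := Complex.re_le_norm _
      _ = ‖u‖ * ‖e.coeff m‖ := by rw [norm_mul, Complex.norm_conj]
      _ ≤ M * M := by
          rw [habsu]
          exact mul_le_mul_of_nonneg_left (hMub e he) (le_of_lt hMpos)
  have hQtfirst : ofLex (F Qt) ⟨0, hn2⟩ = M * M := by
    refine le_antisymm (hub Qt hQtS) ?_
    by_contra hlt
    push_neg at hlt
    have h1 : F Qt < F Q0 :=
      lex_lt_first hn2 (ofLex (F Qt)) (ofLex (F Q0)) (by rw [hFQ0]; exact hlt)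
    exact absurd (hQtmax Q0 hQ0S) (not_le.mpr h1)
  have habsQt : ‖Qt.coeff m‖ = M := by
    have h1 : M * M ≤ ‖u‖ * ‖Qt.coeff m‖ := by
      rw [← hQtfirst, hfirst]
      calc ((starRingEnd ℂ) u * Qt.coeff m).re
          ≤ ‖(starRingEnd ℂ) u * Qt.coeff m‖ := Complex.re_le_norm _
        _ = ‖u‖ * ‖Qt.coeff m‖ := by rw [norm_mul, Complex.norm_conj]
    rw [habsu] at h1
    have h2 := hMub Qt hQtS
    have h3 : M ≤ ‖Qt.coeff m‖ := (mul_le_mul_iff_right₀ hMpos).mp h1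
    linarith
  have hFQtpos : (0 : Lex (Fin (2*m+2) → ℝ)) < F Qt := by
    have h0 : (0 : Lex (Fin (2*m+2) → ℝ)) = toLex (ofLex (0 : Lex (Fin (2*m+2) → ℝ))) := rfl
    have h2 := lex_lt_first hn2 (ofLex (0 : Lex (Fin (2*m+2) → ℝ))) (ofLex (F Qt))
      (by
        rw [hQtfirst]
        have h3 : ofLex (0 : Lex (Fin (2*m+2) → ℝ)) ⟨0, hn2⟩ = 0 := rfl
        rw [h3]
        exact mul_pos hMpos hMpos)
    simpa using h2
  refine ⟨Qt, hQtS, ?_, ?_, ?_, habsQt⟩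
  · intro e1 he1 e2 he2 hsum
    have h1 : F e1 + F e2 = F Qt + F Qt := by
      rw [hFdef, ← Fmap_add, ← Fmap_add, hsum]
    obtain ⟨g1, g2⟩ := convex_max (hQtmax e1 he1) (hQtmax e2 he2) h1
    exact ⟨Fmap_inj hu (hdegS e1 he1) (hdegS Qt hQtS) g1,
      Fmap_inj hu (hdegS e2 he2) (hdegS Qt hQtS) g2⟩
  · intro hSmem
    have h1 : F (Qt + Qt) ≤ F Qt := hQtmax _ hSmem
    have h2 : F Qt < F (Qt + Qt) := by
      rw [hFdef, Fmap_add]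
      exact lt_add_of_pos_left _ hFQtpos
    exact absurd h1 (not_le.mpr h2)
  · intro h
    have h1 := congrArg F h
    rw [hFdef, Fmap_add, Fmap_zero] at h1
    have h2 := add_pos hFQtpos hFQtpos
    rw [h1] at h2
    exact lt_irrefl _ h2

end EPaux3

open Polynomial

namespace EPaux4

noncomputable def sigmap (q : ℂ) (Q : ℂ[X]) : ℂ[X] := Q.comp (Polynomial.C q * Polynomial.X)

noncomputable def bigE (q : ℂ) (E : Finset ℂ[X]) : Finset ℂ[X] :=
  ((E ∪ E.image (sigmap q)) ∪ (E ×ˢ E).image (fun r => r.1 + r.2)) ∪ {0}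

noncomputable def bigc (A B C D q : ℂ) (E : Finset ℂ[X]) (c : ℂ[X] → ℂ[X]) (e : ℂ[X]) : ℂ[X] :=
  (if e ∈ E then ((c e).derivative + c e * e.derivative - Polynomial.C C * c e) else 0)
  + (∑ Q ∈ E.filter (fun Q => sigmap q Q = e),
      (-(Polynomial.C A) * (c Q).comp (Polynomial.C q * Polynomial.X)))
  + (∑ r ∈ (E ×ˢ E).filter (fun r => r.1 + r.2 = e), (-(Polynomial.C B) * (c r.1 * c r.2)))
  + (if e = 0 then -(Polynomial.C D) else 0)

lemma E_subset_bigE (q : ℂ) (E : Finset ℂ[X]) : E ⊆ bigE q E := fun e he =>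
  Finset.mem_union_left _ (Finset.mem_union_left _ (Finset.mem_union_left _ he))

lemma sigmap_mem_bigE (q : ℂ) (E : Finset ℂ[X]) {Q : ℂ[X]} (hQ : Q ∈ E) :
    sigmap q Q ∈ bigE q E :=
  Finset.mem_union_left _ (Finset.mem_union_left _
    (Finset.mem_union_right _ (Finset.mem_image_of_mem _ hQ)))

lemma addpair_mem_bigE (q : ℂ) (E : Finset ℂ[X]) {r : ℂ[X] × ℂ[X]} (hr : r ∈ E ×ˢ E) :
    r.1 + r.2 ∈ bigE q E :=
  Finset.mem_union_left _ (Finset.mem_union_right _ (Finset.mem_image_of_mem _ hr))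

lemma zero_mem_bigE (q : ℂ) (E : Finset ℂ[X]) : (0:ℂ[X]) ∈ bigE q E :=
  Finset.mem_union_right _ (Finset.mem_singleton_self 0)

lemma big_identity (A B C D q : ℂ) (f : ℂ → ℂ) (E : Finset ℂ[X]) (c : ℂ[X] → ℂ[X])
    (hrep : ∀ z, f z = ∑ e ∈ E, (c e).eval z * Complex.exp (e.eval z))
    (heq : ∀ z : ℂ, deriv f z = A * f (q * z) + B * (f z) ^ 2 + C * f z + D) :
    ∀ z, ∑ e ∈ bigE q E, (bigc A B C D q E c e).eval z * Complex.exp (e.eval z) = 0 := by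
  intro z
  -- split the sum into four parts
  have hsplit : ∑ e ∈ bigE q E, (bigc A B C D q E c e).eval z * Complex.exp (e.eval z)
      = (∑ e ∈ bigE q E, (if e ∈ E then ((c e).derivative + c e * e.derivative
            - Polynomial.C C * c e) else 0).eval z * Complex.exp (e.eval z))
      + (∑ e ∈ bigE q E, (∑ Q ∈ E.filter (fun Q => sigmap q Q = e),
            (-(Polynomial.C A) * (c Q).comp (Polynomial.C q * Polynomial.X))).eval z
            * Complex.exp (e.eval z))
      + (∑ e ∈ bigE q E, (∑ r ∈ (E ×ˢ E).filter (fun r => r.1 + r.2 = e),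
            (-(Polynomial.C B) * (c r.1 * c r.2))).eval z * Complex.exp (e.eval z))
      + (∑ e ∈ bigE q E, (if e = 0 then -(Polynomial.C D) else 0).eval z
            * Complex.exp (e.eval z)) := by
    rw [← Finset.sum_add_distrib, ← Finset.sum_add_distrib, ← Finset.sum_add_distrib]
    apply Finset.sum_congr rfl
    intro e _
    unfold bigc
    simp only [eval_add]
    ring
  rw [hsplit]
  -- part 1
  have hT1 : (∑ e ∈ bigE q E, (if e ∈ E then ((c e).derivative + c e * e.derivative
        - Polynomial.C C * c e) else 0).eval z * Complex.exp (e.eval z))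
      = ∑ Q ∈ E, ((c Q).derivative + c Q * Q.derivative - Polynomial.C C * c Q).eval z
          * Complex.exp (Q.eval z) := by
    have h1 : ∀ e ∈ bigE q E, (if e ∈ E then ((c e).derivative + c e * e.derivative
        - Polynomial.C C * c e) else 0).eval z * Complex.exp (e.eval z)
        = if e ∈ E then ((c e).derivative + c e * e.derivative
            - Polynomial.C C * c e).eval z * Complex.exp (e.eval z) else 0 := by
      intro e _
      split <;> simp
    rw [Finset.sum_congr rfl h1, Finset.sum_ite_mem]
    congr 1
    exact Finset.inter_eq_right.mpr (E_subset_bigE q E)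
  -- part 2
  have hT2 : (∑ e ∈ bigE q E, (∑ Q ∈ E.filter (fun Q => sigmap q Q = e),
        (-(Polynomial.C A) * (c Q).comp (Polynomial.C q * Polynomial.X))).eval z
        * Complex.exp (e.eval z))
      = ∑ Q ∈ E, (-(Polynomial.C A) * (c Q).comp (Polynomial.C q * Polynomial.X)).eval z
          * Complex.exp ((sigmap q Q).eval z) := by
    rw [← Finset.sum_fiberwise_of_maps_to (fun Q hQ => sigmap_mem_bigE q E hQ)
      (fun Q => (-(Polynomial.C A) * (c Q).comp (Polynomial.C q * Polynomial.X)).eval z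
          * Complex.exp ((sigmap q Q).eval z))]
    apply Finset.sum_congr rfl
    intro e _
    rw [eval_finset_sum, Finset.sum_mul]
    apply Finset.sum_congr rfl
    intro Q hQ
    rw [(Finset.mem_filter.mp hQ).2]
  -- part 3
  have hT3 : (∑ e ∈ bigE q E, (∑ r ∈ (E ×ˢ E).filter (fun r => r.1 + r.2 = e),
        (-(Polynomial.C B) * (c r.1 * c r.2))).eval z * Complex.exp (e.eval z))
      = ∑ r ∈ E ×ˢ E, (-(Polynomial.C B) * (c r.1 * c r.2)).eval z
          * Complex.exp ((r.1 + r.2).eval z) := by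
    rw [← Finset.sum_fiberwise_of_maps_to (fun r hr => addpair_mem_bigE q E hr)
      (fun r => (-(Polynomial.C B) * (c r.1 * c r.2)).eval z
          * Complex.exp ((r.1 + r.2).eval z))]
    apply Finset.sum_congr rfl
    intro e _
    rw [eval_finset_sum, Finset.sum_mul]
    apply Finset.sum_congr rfl
    intro r hr
    rw [(Finset.mem_filter.mp hr).2]
  -- part 4
  have hT4 : (∑ e ∈ bigE q E, (if e = 0 then -(Polynomial.C D) else 0).eval z
        * Complex.exp (e.eval z)) = -D := by
    have h1 : ∀ e ∈ bigE q E, (if e = 0 then -(Polynomial.C D) else 0).eval z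
        * Complex.exp (e.eval z) = if e = 0 then -D else 0 := by
      intro e _
      split
      · next h => subst h; simp
      · simp
    rw [Finset.sum_congr rfl h1, Finset.sum_ite_eq' (bigE q E) 0 (fun _ => -D),
      if_pos (zero_mem_bigE q E)]
  rw [hT1, hT2, hT3, hT4]
  -- now compute the three main pieces
  have hf : f = fun w => ∑ e ∈ E, (c e).eval w * Complex.exp (e.eval w) := funext hrep
  have hderiv : deriv f z = ∑ Q ∈ E, ((c Q).derivative + c Q * Q.derivative).eval z
      * Complex.exp (Q.eval z) := by
    rw [hf]
    exact (EPaux.hasDerivAt_expsum E c z).deriv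
  have h1 : ∑ Q ∈ E, ((c Q).derivative + c Q * Q.derivative - Polynomial.C C * c Q).eval z
      * Complex.exp (Q.eval z) = deriv f z - C * f z := by
    rw [hderiv, hrep z, Finset.mul_sum, ← Finset.sum_sub_distrib]
    apply Finset.sum_congr rfl
    intro Q _
    simp only [eval_sub, eval_add, eval_mul, eval_C]
    ring
  have h2 : ∑ Q ∈ E, (-(Polynomial.C A) * (c Q).comp (Polynomial.C q * Polynomial.X)).eval z
      * Complex.exp ((sigmap q Q).eval z) = -(A * f (q * z)) := by
    rw [hrep (q * z), Finset.mul_sum, ← Finset.sum_neg_distrib]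
    apply Finset.sum_congr rfl
    intro Q _
    unfold sigmap
    simp only [eval_mul, eval_neg, eval_C, eval_comp, eval_X]
    ring
  have h3 : ∑ r ∈ E ×ˢ E, (-(Polynomial.C B) * (c r.1 * c r.2)).eval z
      * Complex.exp ((r.1 + r.2).eval z) = -(B * (f z)^2) := by
    rw [hrep z]
    rw [Finset.sum_product]
    have : ∀ Q1 ∈ E, ∀ Q2 ∈ E, (-(Polynomial.C B) * (c Q1 * c Q2)).eval z
        * Complex.exp ((Q1 + Q2).eval z)
        = -B * (((c Q1).eval z * Complex.exp (Q1.eval z))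
            * ((c Q2).eval z * Complex.exp (Q2.eval z))) := by
      intro Q1 _ Q2 _
      simp only [eval_mul, eval_neg, eval_C, eval_add, Complex.exp_add]
      ring
    calc ∑ Q1 ∈ E, ∑ Q2 ∈ E, (-(Polynomial.C B) * (c Q1 * c Q2)).eval z
          * Complex.exp ((Q1 + Q2).eval z)
        = ∑ Q1 ∈ E, ∑ Q2 ∈ E, -B * (((c Q1).eval z * Complex.exp (Q1.eval z))
            * ((c Q2).eval z * Complex.exp (Q2.eval z))) := by
          apply Finset.sum_congr rfl; intro Q1 h1'
          apply Finset.sum_congr rfl; intro Q2 h2'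
          exact this Q1 h1' Q2 h2'
      _ = -(B * (∑ e ∈ E, (c e).eval z * Complex.exp (e.eval z))^2) := by
          rw [sq, Finset.sum_mul_sum]
          simp only [Finset.mul_sum, neg_mul]
          rw [← Finset.sum_neg_distrib]
          apply Finset.sum_congr rfl
          intro Q1 _
          rw [← Finset.sum_neg_distrib]
  rw [h1, h2, h3, heq z]
  ring
end EPaux4


set_option maxHeartbeats 2000000 in
/-- For `A ≠ 0`, `B ≠ 0`, `0 < |q| < 1`: if an exponential polynomial
`f(z) = Σ_{j=1}^k P_j(z) exp(Q_j(z))` satisfies `f'(z) = A f(qz) + B f(z)² + C f(z) + D`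
for all `z`, then `f` is constant. -/
theorem stmt3 (A B C D q : ℂ) (hA : A ≠ 0) (hB : B ≠ 0)
    (hq0 : 0 < ‖q‖) (hq1 : ‖q‖ < 1)
    (f : ℂ → ℂ)
    (hexp : ∃ (k : ℕ) (P Q : Fin k → Polynomial ℂ),
      ∀ z : ℂ, f z = ∑ j : Fin k, (P j).eval z * Complex.exp ((Q j).eval z))
    (heq : ∀ z : ℂ, deriv f z = A * f (q * z) + B * (f z) ^ 2 + C * f z + D) :
    ∃ c : ℂ, ∀ z : ℂ, f z = c := by
  classical
  obtain ⟨k, P, Q, hf⟩ := hexp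
  -- Step 1: normalized representation with constant-free distinct exponents
  have hnorm : ∃ (E : Finset ℂ[X]) (c : ℂ[X] → ℂ[X]),
      (∀ e ∈ E, e.coeff 0 = 0) ∧
      (∀ z, f z = ∑ e ∈ E, (c e).eval z * Complex.exp (e.eval z)) := by
    refine ⟨Finset.image (fun j => Q j - Polynomial.C ((Q j).coeff 0)) Finset.univ,
      fun e => ∑ j ∈ Finset.univ.filter (fun j => Q j - Polynomial.C ((Q j).coeff 0) = e),
        Polynomial.C (Complex.exp ((Q j).coeff 0)) * P j, ?_, ?_⟩
    · intro e he
      obtain ⟨j, _, rfl⟩ := Finset.mem_image.mp he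
      simp [Polynomial.coeff_sub, Polynomial.coeff_C]
    · intro z
      rw [hf z]
      rw [← Finset.sum_fiberwise_of_maps_to
        (fun j _ => Finset.mem_image_of_mem (fun j => Q j - Polynomial.C ((Q j).coeff 0))
          (Finset.mem_univ j))
        (fun j => (P j).eval z * Complex.exp ((Q j).eval z))]
      apply Finset.sum_congr rfl
      intro e _
      rw [Polynomial.eval_finset_sum, Finset.sum_mul]
      apply Finset.sum_congr rfl
      intro j hj
      have hje := (Finset.mem_filter.mp hj).2
      rw [← hje]
      simp only [Polynomial.eval_mul, Polynomial.eval_C, Polynomial.eval_sub]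
      rw [show (Q j).eval z = (Q j).coeff 0 + ((Q j).eval z - (Q j).coeff 0) by ring,
        Complex.exp_add]
      ring
  obtain ⟨E, c, hE0, hrep⟩ := hnorm
  -- Step 2: all exponents with nonzero coefficient are constant (hence zero)
  have hS0 : ∀ e ∈ E, c e ≠ 0 → e.natDegree = 0 := by
    by_contra hcon
    push_neg at hcon
    obtain ⟨Qw, hQwE, hQwc, hQwdeg⟩ := hcon
    set S : Finset ℂ[X] := E.filter (fun e => c e ≠ 0) with hSdef
    have hQwS : Qw ∈ S := Finset.mem_filter.mpr ⟨hQwE, hQwc⟩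
    have hSne : S.Nonempty := ⟨Qw, hQwS⟩
    have hSsub : ∀ e ∈ S, e ∈ E := fun e he => (Finset.mem_filter.mp he).1
    have hScne : ∀ e ∈ S, c e ≠ 0 := fun e he => (Finset.mem_filter.mp he).2
    set m : ℕ := S.sup Polynomial.natDegree with hmdef
    have hdegS : ∀ e ∈ S, e.natDegree ≤ m := fun e he => Finset.le_sup he
    have hm1 : 1 ≤ m := by
      have h := Finset.le_sup (f := Polynomial.natDegree) hQwS
      rw [← hmdef] at h
      omega
    obtain ⟨Q1, hQ1S, hQ1deg⟩ := Finset.exists_mem_eq_sup S hSne Polynomial.natDegree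
    have hQ1deg' : Q1.natDegree = m := by rw [hmdef, hQ1deg]
    have hQ1ne : Q1 ≠ 0 := by
      intro h; rw [h, Polynomial.natDegree_zero] at hQ1deg'; omega
    set M : ℝ := (S.image fun e => ‖e.coeff m‖).max' (hSne.image _) with hMdef
    have hMub : ∀ e ∈ S, ‖e.coeff m‖ ≤ M := by
      intro e he
      rw [hMdef]
      exact Finset.le_max' (S.image fun e => ‖e.coeff m‖) _
        (Finset.mem_image_of_mem _ he)
    have hQ0ex : ∃ e ∈ S, ‖e.coeff m‖ = M := by
      have h := Finset.max'_mem (S.image fun e => ‖e.coeff m‖) (hSne.image _)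
      obtain ⟨e, he, heq'⟩ := Finset.mem_image.mp h
      exact ⟨e, he, heq'⟩
    have hMpos : 0 < M := by
      have h1 : Q1.coeff m ≠ 0 := by
        rw [← hQ1deg']
        exact Polynomial.leadingCoeff_ne_zero.mpr hQ1ne
      calc (0:ℝ) < ‖Q1.coeff m‖ := norm_pos_iff.mpr h1
        _ ≤ M := hMub Q1 hQ1S
    obtain ⟨Qt, hQtS, haa, hQQnotS, hQQne, habsQt⟩ :=
      EPaux3.choose_top S hSne m M hdegS hMub hMpos hQ0ex
    have hQtE : Qt ∈ E := hSsub Qt hQtS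
    have hcQQ : Qt + Qt ∈ E → c (Qt + Qt) = 0 := by
      intro hmem
      by_contra hne
      exact hQQnotS (Finset.mem_filter.mpr ⟨hmem, hne⟩)
    have hcsig : ∀ e ∈ E, EPaux4.sigmap q e = Qt + Qt → c e = 0 := by
      intro e he hsig
      by_contra hne
      have heS : e ∈ S := Finset.mem_filter.mpr ⟨he, hne⟩
      have hco := congrArg (fun r : ℂ[X] => r.coeff m) hsig
      simp only [EPaux4.sigmap, EPaux.scale_coeff, Polynomial.coeff_add] at hco
      have habs := congrArg (‖·‖) hco
      rw [norm_mul, norm_pow] at habs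
      have hb1 : ‖Qt.coeff m + Qt.coeff m‖ = 2 * M := by
        rw [← two_mul, norm_mul, habsQt]
        norm_num
      rw [hb1] at habs
      have hb2 : ‖e.coeff m‖ ≤ M := hMub e heS
      have hb3 : ‖q‖ ^ m < 1 :=
        pow_lt_one₀ (norm_nonneg q) hq1 (by omega)
      have hb4 : (0:ℝ) ≤ ‖q‖ ^ m := pow_nonneg (norm_nonneg q) m
      have hb5 : (0:ℝ) ≤ ‖e.coeff m‖ := norm_nonneg _
      nlinarith
    have hE'0 : ∀ e ∈ EPaux4.bigE q E, e.coeff 0 = 0 := by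
      intro e he
      unfold EPaux4.bigE at he
      rcases Finset.mem_union.mp he with h1 | h1
      · rcases Finset.mem_union.mp h1 with h2 | h2
        · rcases Finset.mem_union.mp h2 with h3 | h3
          · exact hE0 e h3
          · obtain ⟨a, ha, rfl⟩ := Finset.mem_image.mp h3
            simp only [EPaux4.sigmap, EPaux.scale_coeff, pow_zero, mul_one]
            exact hE0 a ha
        · obtain ⟨r, hr, rfl⟩ := Finset.mem_image.mp h2
          have hmem := Finset.mem_product.mp hr
          rw [Polynomial.coeff_add, hE0 _ hmem.1, hE0 _ hmem.2, add_zero]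
      · rw [Finset.mem_singleton.mp h1]; simp
    have hdiffE' : ∀ a ∈ EPaux4.bigE q E, ∀ b ∈ EPaux4.bigE q E, a ≠ b →
        (a - b).natDegree ≠ 0 := by
      intro a ha b hb hne hdeg0
      have h1 := Polynomial.eq_C_of_natDegree_eq_zero hdeg0
      rw [Polynomial.coeff_sub, hE'0 a ha, hE'0 b hb, sub_zero, Polynomial.C_0] at h1
      exact hne (sub_eq_zero.mp h1)
    have hbig := EPaux4.big_identity A B C D q f E c hrep heq
    have hall := EPaux2.indep (EPaux4.bigE q E).card (EPaux4.bigE q E)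
      (EPaux4.bigc A B C D q E c) le_rfl hdiffE' hbig
    have hzero := hall (Qt + Qt)
      (EPaux4.addpair_mem_bigE q E (r := (Qt, Qt)) (Finset.mem_product.mpr ⟨hQtE, hQtE⟩))
    unfold EPaux4.bigc at hzero
    have hp1 : (if Qt + Qt ∈ E then ((c (Qt+Qt)).derivative + c (Qt+Qt) * (Qt+Qt).derivative
        - Polynomial.C C * c (Qt+Qt)) else 0) = 0 := by
      split
      · next h => rw [hcQQ h]; simp
      · rfl
    have hp2 : (∑ Q' ∈ E.filter (fun Q' => EPaux4.sigmap q Q' = Qt + Qt),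
        (-(Polynomial.C A) * (c Q').comp (Polynomial.C q * Polynomial.X))) = 0 := by
      apply Finset.sum_eq_zero
      intro Q' hQ'
      obtain ⟨hQ'E, hQ'sig⟩ := Finset.mem_filter.mp hQ'
      rw [hcsig Q' hQ'E hQ'sig]
      simp
    have hp3 : (∑ r ∈ (E ×ˢ E).filter (fun r => r.1 + r.2 = Qt + Qt),
        (-(Polynomial.C B) * (c r.1 * c r.2))) = -(Polynomial.C B) * (c Qt * c Qt) := by
      apply Finset.sum_eq_single_of_mem (Qt, Qt)
      · exact Finset.mem_filter.mpr ⟨Finset.mem_product.mpr ⟨hQtE, hQtE⟩, rfl⟩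
      · intro r hr hrne
        obtain ⟨hrE, hrsum⟩ := Finset.mem_filter.mp hr
        obtain ⟨hr1, hr2⟩ := Finset.mem_product.mp hrE
        by_cases hc1 : c r.1 = 0
        · rw [hc1]; ring
        by_cases hc2 : c r.2 = 0
        · rw [hc2]; ring
        · obtain ⟨e1, e2⟩ := haa r.1 (Finset.mem_filter.mpr ⟨hr1, hc1⟩) r.2
            (Finset.mem_filter.mpr ⟨hr2, hc2⟩) hrsum
          exact absurd (Prod.ext e1 e2) hrne
    have hp4 : (if (Qt + Qt : ℂ[X]) = 0 then -(Polynomial.C D) else 0) = 0 := if_neg hQQne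
    rw [hp1, hp2, hp3, hp4, zero_add, zero_add, add_zero] at hzero
    have hmul : c Qt * c Qt = 0 := by
      rcases mul_eq_zero.mp hzero with h | h
      · exact absurd (neg_eq_zero.mp h) (Polynomial.C_ne_zero.mpr hB)
      · exact h
    exact absurd (mul_self_eq_zero.mp hmul) (hScne Qt hQtS)
  -- Step 3: f is a polynomial
  have hpoly : ∀ e ∈ E, c e ≠ 0 → e = 0 := by
    intro e he hce
    have h1 := hS0 e he hce
    have h2 := Polynomial.eq_C_of_natDegree_eq_zero h1
    rw [hE0 e he] at h2
    simpa using h2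
  set p : ℂ[X] := if (0:ℂ[X]) ∈ E then c 0 else 0 with hp
  have hfp : ∀ z, f z = p.eval z := by
    intro z
    rw [hrep z]
    have h1 : ∀ e ∈ E, (c e).eval z * Complex.exp (e.eval z)
        = if e = 0 then (c e).eval z else 0 := by
      intro e he
      by_cases h : e = (0:ℂ[X])
      · subst h; simp
      · rw [if_neg h]
        by_cases hc : c e = 0
        · rw [hc]; simp
        · exact absurd (hpoly e he hc) h
    rw [Finset.sum_congr rfl h1, Finset.sum_ite_eq' E 0 (fun e => (c e).eval z)]
    rw [hp]
    split
    · rfl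
    · simp
  -- Step 4: the polynomial is constant
  have hpid : p.derivative = Polynomial.C A * p.comp (Polynomial.C q * Polynomial.X)
      + Polynomial.C B * p^2 + Polynomial.C C * p + Polynomial.C D := by
    apply Polynomial.funext
    intro z
    have hder : deriv f z = p.derivative.eval z := by
      rw [funext hfp]; exact (p.hasDerivAt z).deriv
    have h2 := heq z
    rw [hder, hfp z, hfp (q*z)] at h2
    simp only [Polynomial.eval_add, Polynomial.eval_mul, Polynomial.eval_C,
      Polynomial.eval_comp, Polynomial.eval_X, Polynomial.eval_pow]
    rw [h2]
  have hdeg : p.natDegree = 0 := by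
    by_contra hn
    have h2n := congrArg (fun r : ℂ[X] => r.coeff (2 * p.natDegree)) hpid
    simp only [Polynomial.coeff_add, Polynomial.coeff_C_mul] at h2n
    have hlt : p.natDegree < 2 * p.natDegree := by omega
    have e1 : p.derivative.coeff (2 * p.natDegree) = 0 :=
      Polynomial.coeff_eq_zero_of_natDegree_lt
        (lt_trans (Polynomial.natDegree_derivative_lt hn) hlt)
    have e2 : (p.comp (Polynomial.C q * Polynomial.X)).coeff (2 * p.natDegree) = 0 := by
      rw [EPaux.scale_coeff, Polynomial.coeff_eq_zero_of_natDegree_lt hlt, zero_mul]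
    have e3 : (p^2).coeff (2 * p.natDegree) = p.leadingCoeff ^ 2 := by
      have := Polynomial.coeff_pow_mul_natDegree p 2
      simpa using this
    have e4 : p.coeff (2 * p.natDegree) = 0 :=
      Polynomial.coeff_eq_zero_of_natDegree_lt hlt
    have e5 : (Polynomial.C D).coeff (2 * p.natDegree) = 0 := by
      rw [Polynomial.coeff_C, if_neg (by omega)]
    rw [e1, e2, e3, e4, e5] at h2n
    simp only [mul_zero, zero_add, add_zero] at h2n
    have hlc : p.leadingCoeff ^ 2 = 0 := by
      rcases mul_eq_zero.mp h2n.symm with h | h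
      · exact absurd h hB
      · exact h
    have : p = 0 := Polynomial.leadingCoeff_eq_zero.mp (pow_eq_zero_iff (by norm_num) |>.mp hlc)
    rw [this] at hn
    simp at hn
  refine ⟨p.coeff 0, fun z => ?_⟩
  rw [hfp z, Polynomial.eq_C_of_natDegree_eq_zero hdeg]
  simp
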